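/- arXiv:2205.10083 — 8 statements merged into one kernel-verified Lean document; each statement's English description precedes it below -/
import Mathlib

section
/- Let V be a finite set and let C : V → Fin χ be a coloring of V using χ ≥ 1 colors. Then there exists a colored separating system 𝓘 on (V, C) consisting of at most 2·⌈log₂ χ⌉ subsets of V. -/
/-- A colored separating system on `(V, C)`: for every ordered pair of distinct
elements `x, y` of `V` with different colors, some `I` in the system contains
`x` but not `y`. -/
def IsColoredSepSystem {V : Type*} {χ : ℕ} (C : V → Fin χ)
    (𝓘 : Finset (Finset V)) : Prop :=
  ∀ x y : V, x ≠ y → C x ≠ C y → ∃ I ∈ 𝓘, x ∈ I ∧ y ∉ I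

/-- Proposition 3: there is a colored separating system on `(V, C)` with at most
`2 ⌈log₂ χ⌉` elements. -/
theorem exists_colored_sep_system {V : Type*} [Fintype V] [DecidableEq V]
    {χ : ℕ} (hχ : 1 ≤ χ) (C : V → Fin χ) :
    ∃ 𝓘 : Finset (Finset V),
      𝓘.card ≤ 2 * Nat.clog 2 χ ∧ IsColoredSepSystem C 𝓘 := by
  classical
  set k := Nat.clog 2 χ with hk
  set f : ℕ → Finset V := fun i => Finset.univ.filter (fun v => ((C v : ℕ).testBit i)) with hf
  set g : ℕ → Finset V := fun i => Finset.univ.filter (fun v => ¬ ((C v : ℕ).testBit i)) with hg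
  refine ⟨(Finset.range k).image f ∪ (Finset.range k).image g, ?_, ?_⟩
  · calc ((Finset.range k).image f ∪ (Finset.range k).image g).card
        ≤ ((Finset.range k).image f).card + ((Finset.range k).image g).card :=
          Finset.card_union_le _ _
      _ ≤ k + k := Nat.add_le_add
          ((Finset.card_image_le).trans (by simp))
          ((Finset.card_image_le).trans (by simp))
      _ = 2 * k := (two_mul k).symm
  · intro x y _ hC
    have hne : (C x : ℕ) ≠ (C y : ℕ) := fun h => hC (Fin.ext h)
    have hbit : ∃ i, (C x : ℕ).testBit i ≠ (C y : ℕ).testBit i := by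
      by_contra h
      push_neg at h
      exact hne (Nat.eq_of_testBit_eq h)
    obtain ⟨i, hi⟩ := hbit
    have hlt : ∀ a : Fin χ, (a : ℕ) < 2 ^ k := fun a =>
      lt_of_lt_of_le a.isLt (Nat.le_pow_clog one_lt_two χ)
    have hik : i < k := by
      by_contra h
      push_neg at h
      have h1 : (C x : ℕ).testBit i = false :=
        Nat.testBit_lt_two_pow (lt_of_lt_of_le (hlt (C x)) (Nat.pow_le_pow_right (by norm_num) h))
      have h2 : (C y : ℕ).testBit i = false :=
        Nat.testBit_lt_two_pow (lt_of_lt_of_le (hlt (C y)) (Nat.pow_le_pow_right (by norm_num) h))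
      exact hi (h1.trans h2.symm)
    by_cases hx : (C x : ℕ).testBit i
    · refine ⟨f i, Finset.mem_union_left _ (Finset.mem_image_of_mem f (Finset.mem_range.mpr hik)), ?_, ?_⟩
      · simp [hf, hx]
      · simp only [hf, Finset.mem_filter, Finset.mem_univ, true_and]
        intro hy
        exact hi (by rw [hx, hy])
    · refine ⟨g i, Finset.mem_union_right _ (Finset.mem_image_of_mem g (Finset.mem_range.mpr hik)), ?_, ?_⟩
      · simp [hg, hx]
      · simp only [hg, Finset.mem_filter, Finset.mem_univ, true_and, not_not]
        cases hy : (C y : ℕ).testBit i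
        · exact absurd (by simp [hx, hy]) hi
        · simp
end

section
/- Let V be a finite set and let 𝒮 = {S_1, …, S_k} be a partition of V into nonempty parts, with s = max_{1≤j≤k} |S_j|. Then there exists a lifted separating system 𝓘 on (V, 𝒮) consisting of at most s subsets of V. -/
/-- A lifted separating system on `(V, 𝒮)`, where `𝒮` is a partition of `V`:
for every part `S` and every `x ∈ S`, some `I` in the system includes
`S \ {x}` and excludes `x`. -/
def IsLiftedSepSystem {V : Type*} [Fintype V] [DecidableEq V]
    (𝒮 : Finpartition (Finset.univ : Finset V)) (𝓘 : Finset (Finset V)) : Prop :=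
  ∀ S ∈ 𝒮.parts, ∀ x ∈ S, ∃ I ∈ 𝓘, S \ {x} ⊆ I ∧ x ∉ I

/-- Proposition 5: there is a lifted separating system on `(V, 𝒮)` with at most
`s` elements, where `s` is the maximum part size of the partition `𝒮`. -/
theorem exists_lifted_sep_system {V : Type*} [Fintype V] [DecidableEq V]
    (𝒮 : Finpartition (Finset.univ : Finset V)) :
    ∃ 𝓘 : Finset (Finset V),
      𝓘.card ≤ 𝒮.parts.sup Finset.card ∧ IsLiftedSepSystem 𝒮 𝓘 := by
  classical
  set s := 𝒮.parts.sup Finset.card with hs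
  -- index of v within its part
  let f : V → ℕ := fun v => (𝒮.part v).toList.idxOf v
  refine ⟨(Finset.range s).image (fun i => Finset.univ.filter (fun v => f v ≠ i)), ?_, ?_⟩
  · exact (Finset.card_image_le).trans (by simp)
  · intro S hS x hx
    have hpart : 𝒮.part x = S := 𝒮.part_eq_of_mem hS hx
    have hxl : x ∈ (𝒮.part x).toList := by rw [Finset.mem_toList, hpart]; exact hx
    have hfx : f x < s := by
      have : f x < S.card := by
        simpa [f, hpart, Finset.length_toList] using List.idxOf_lt_length_iff.2 hxl
      exact this.trans_le (Finset.le_sup hS)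
    refine ⟨Finset.univ.filter (fun v => f v ≠ f x), Finset.mem_image.2 ⟨f x,
      Finset.mem_range.2 hfx, rfl⟩, ?_, by simp⟩
    intro y hy
    simp only [Finset.mem_sdiff, Finset.mem_singleton] at hy
    have hyp : 𝒮.part y = S := 𝒮.part_eq_of_mem hS hy.1
    have hyl : y ∈ (𝒮.part y).toList := by rw [Finset.mem_toList, hyp]; exact hy.1
    simp only [Finset.mem_filter, Finset.mem_univ, true_and]
    intro h
    apply hy.2
    have h2 : List.idxOf y S.toList = List.idxOf x S.toList := by
      simpa only [f, hyp, hpart] using h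
    exact (List.idxOf_inj (by rwa [hyp] at hyl)).1 h2
end

section
/- Let V be a finite set and let 𝒮 be a partition of V into nonempty parts with maximum part size s ≥ 2. Then there exists a lifted separating system 𝓘 on (V, 𝒮) in which every element I ∈ 𝓘 satisfies |I| ≤ s − 1. -/
/-- Corollary 7: if the maximum part size `s` of the partition `𝒮` satisfies
`s ≥ 2`, then there is a lifted separating system on `(V, 𝒮)` all of whose
elements have size at most `s - 1`. -/
theorem exists_lifted_sep_system_size_le {V : Type*} [Fintype V] [DecidableEq V]
    (𝒮 : Finpartition (Finset.univ : Finset V))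
    (hs : 2 ≤ 𝒮.parts.sup Finset.card) :
    ∃ 𝓘 : Finset (Finset V),
      (∀ I ∈ 𝓘, I.card ≤ 𝒮.parts.sup Finset.card - 1) ∧
      IsLiftedSepSystem 𝒮 𝓘 := by
  refine ⟨𝒮.parts.biUnion (fun S => S.image (fun x => S \ {x})), ?_, ?_⟩
  · intro I hI
    simp only [Finset.mem_biUnion, Finset.mem_image] at hI
    obtain ⟨S, hS, x, hx, rfl⟩ := hI
    have h1 : S.card ≤ 𝒮.parts.sup Finset.card := Finset.le_sup hS
    have : (S \ {x}).card = S.card - 1 := by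
      rw [Finset.card_sdiff_of_subset (by simpa using hx)]
      simp
    omega
  · intro S hS x hx
    refine ⟨S \ {x}, ?_, le_refl _, by simp⟩
    simp only [Finset.mem_biUnion, Finset.mem_image]
    exact ⟨S, hS, x, hx, rfl⟩
end

section
/- Let V be a finite set with |V| = n and let M be an integer with 1 ≤ M < n. Then there exists a collection 𝓘 of subsets of V with |I| ≤ M for every I ∈ 𝓘 and |𝓘| ≤ ⌈n/M⌉·⌈log_{⌈n/M⌉} n⌉, such that for every ordered pair (x, y) of distinct elements of V there exists I ∈ 𝓘 with x ∈ I and y ∉ I. -/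
/-- The `j`-th digit of the balanced base-`k` code of `i`. -/
def sepDigit (k j i : ℕ) : ℕ := if j = 0 then i % k else (i / k ^ j + i) % k

lemma sepDigit_lt {k : ℕ} (hk : 0 < k) (j i : ℕ) : sepDigit k j i < k := by
  unfold sepDigit; split <;> exact Nat.mod_lt _ hk

/-- Within a block of `k` consecutive integers, each digit value occurs at most once. -/
lemma sepDigit_block_inj {k : ℕ} (hk : 0 < k) (j : ℕ) {i i' : ℕ}
    (hdiv : i / k = i' / k) (hdig : sepDigit k j i = sepDigit k j i') : i = i' := by
  have hmod : i % k = i' % k := by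
    by_cases hj : j = 0
    · simpa [sepDigit, hj] using hdig
    · simp only [sepDigit, if_neg hj] at hdig
      have hpow : i / k ^ j = i' / k ^ j := by
        obtain ⟨m, rfl⟩ := Nat.exists_eq_succ_of_ne_zero hj
        rw [pow_succ']
        rw [← Nat.div_div_eq_div_mul, ← Nat.div_div_eq_div_mul, hdiv]
      rw [hpow] at hdig
      exact Nat.ModEq.add_left_cancel' _ hdig
  calc i = k * (i / k) + i % k := (Nat.div_add_mod i k).symm
    _ = k * (i' / k) + i' % k := by rw [hdiv, hmod]
    _ = i' := Nat.div_add_mod i' k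

lemma mod_pow_succ' (k j i : ℕ) : i % k ^ (j + 1) = i % k ^ j + k ^ j * (i / k ^ j % k) := by
  rw [pow_succ, Nat.mod_mul]

/-- The digit code is injective on `[0, n)` when `n ≤ k ^ t`. -/
lemma sepDigit_inj {k t n : ℕ} (hk : 1 < k) (hn : n ≤ k ^ t) {i i' : ℕ}
    (hi : i < n) (hi' : i' < n) (h : ∀ j < t, sepDigit k j i = sepDigit k j i') : i = i' := by
  have hk0 : 0 < k := by omega
  have key : ∀ j ≤ t, i % k ^ j = i' % k ^ j := by
    intro j hj
    induction j with
    | zero => simp [Nat.mod_one]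
    | succ m ih =>
      have hm : i % k ^ m = i' % k ^ m := ih (by omega)
      have hdig := h m (by omega)
      have hdivmod : i / k ^ m % k = i' / k ^ m % k := by
        unfold sepDigit at hdig
        split at hdig
        · rename_i hm0; subst hm0; simpa [Nat.div_one] using hdig
        · rename_i hm0
          have hmk : i % k = i' % k := by
            have : k ∣ k ^ m := dvd_pow_self k hm0
            calc i % k = i % k ^ m % k := (Nat.mod_mod_of_dvd i this).symm
              _ = i' % k ^ m % k := by rw [hm]
              _ = i' % k := Nat.mod_mod_of_dvd i' this
          exact Nat.ModEq.add_right_cancel hmk hdig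
      rw [mod_pow_succ', mod_pow_succ', hm, hdivmod]
  have := key t le_rfl
  rwa [Nat.mod_eq_of_lt (lt_of_lt_of_le hi hn),
    Nat.mod_eq_of_lt (lt_of_lt_of_le hi' hn)] at this

/-- Proposition 6 (Shanmugam et al.): for `1 ≤ M < n = |V|`, there is an
`(n, M)`-separating system on `V` with at most `⌈n/M⌉ ⌈log_{⌈n/M⌉} n⌉`
elements: a collection of subsets of `V`, each of size at most `M`, such that
for every ordered pair of distinct elements `(x, y)` some member contains `x`
but not `y`.  Here `⌈n/M⌉ = (n + M - 1) / M` and `⌈log_k n⌉ = Nat.clog k n`. -/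
theorem exists_nM_sep_system {V : Type*} [Fintype V] [DecidableEq V]
    (M : ℕ) (hM : 1 ≤ M) (hMn : M < Fintype.card V) :
    ∃ 𝓘 : Finset (Finset V),
      (∀ I ∈ 𝓘, I.card ≤ M) ∧
      𝓘.card ≤ ((Fintype.card V + M - 1) / M) *
        Nat.clog ((Fintype.card V + M - 1) / M) (Fintype.card V) ∧
      ∀ x y : V, x ≠ y → ∃ I ∈ 𝓘, x ∈ I ∧ y ∉ I := by
  set n := Fintype.card V with hn
  set k := (n + M - 1) / M with hkdef
  set t := Nat.clog k n with htdef
  have hM0 : 0 < M := hM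
  have hk2 : 2 ≤ k := by
    rw [hkdef]
    rw [Nat.le_div_iff_mul_le hM0]
    omega
  have hk0 : 0 < k := by omega
  -- n ≤ k * M
  have hnkM : n ≤ k * M := by
    have := Nat.lt_div_mul_add (a := n + M - 1) hM0
    rw [← hkdef] at this
    omega
  -- ceiling n/k ≤ M
  have hceil : (n + k - 1) / k ≤ M := by
    rw [Nat.div_le_iff_le_mul_add_pred hk0]
    omega
  have hnt : n ≤ k ^ t := Nat.le_pow_clog hk2 n
  let e : V ≃ Fin n := Fintype.equivFin V
  let f : ℕ × ℕ → Finset V := fun p =>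
    Finset.univ.filter (fun v => sepDigit k p.1 (e v) = p.2)
  refine ⟨(Finset.range t ×ˢ Finset.range k).image f, ?_, ?_, ?_⟩
  · -- size bound for each set
    intro I hI
    obtain ⟨p, _, rfl⟩ := Finset.mem_image.mp hI
    calc (f p).card ≤ (Finset.range ((n + k - 1) / k)).card := by
          apply Finset.card_le_card_of_injOn (fun v => (e v : ℕ) / k)
          · intro v _
            rw [Finset.mem_coe, Finset.mem_range]; beta_reduce
            have hv : (e v : ℕ) ≤ n - 1 := by have := (e v).isLt; omega
            have h1 : (e v : ℕ) / k ≤ (n - 1) / k := Nat.div_le_div_right hv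
            have h2 : (n - 1 + k) / k = (n - 1) / k + 1 := Nat.add_div_right _ hk0
            rw [show n - 1 + k = n + k - 1 by omega] at h2
            omega
          · intro v hv w hw hvw
            simp only [f, Finset.coe_filter, Set.mem_setOf_eq] at hv hw
            have := sepDigit_block_inj hk0 p.1 hvw (hv.2.trans hw.2.symm)
            have : e v = e w := Fin.ext this
            exact e.injective this
      _ = (n + k - 1) / k := Finset.card_range _
      _ ≤ M := hceil
  · -- cardinality of the family
    calc ((Finset.range t ×ˢ Finset.range k).image f).card
        ≤ (Finset.range t ×ˢ Finset.range k).card := Finset.card_image_le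
      _ = t * k := by rw [Finset.card_product, Finset.card_range, Finset.card_range]
      _ = k * t := Nat.mul_comm _ _
  · -- separation
    intro x y hxy
    have hex : (e x : ℕ) ≠ (e y : ℕ) := by
      intro h
      exact hxy (e.injective (Fin.ext h))
    have : ¬ ∀ j < t, sepDigit k j (e x) = sepDigit k j (e y) := by
      intro h
      exact hex (sepDigit_inj hk2 hnt (e x).isLt (e y).isLt h)
    push_neg at this
    obtain ⟨j, hj, hne⟩ := this
    refine ⟨f (j, sepDigit k j (e x)), ?_, ?_, ?_⟩
    · apply Finset.mem_image_of_mem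
      rw [Finset.mem_product, Finset.mem_range, Finset.mem_range]
      exact ⟨hj, sepDigit_lt hk0 _ _⟩
    · simp [f]
    · simp only [f, Finset.mem_filter]
      tauto
end

section
/- Let G be a directed graph on a finite vertex set V, let U be an undirected graph on V whose edge set contains the skeleton of G (i.e., any two vertices adjacent in G are adjacent in U), let C be a proper vertex coloring of U, and let 𝓘 be a colored separating system on (V, C). For each X ∈ V define D_X = (⋃_{I ∈ 𝓘 with X ∈ I} De(X, G_Ī)) ∩ Ne_U(X), where Ne_U(X) is the set of U-neighbors of X. Then Ch(X, G) ⊆ D_X ⊆ De(X, G) for every X ∈ V. -/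
/-- Lemma 2 (correctness of the sets `D_X` in Algorithm 1).

A directed graph on a finite vertex set `V` is given by an irreflexive edge
relation `E`.  The intervened graph `G_Ī` has edge relation
`fun u v => E u v ∧ v ∉ I`.  Descendants are given by the reflexive-transitive
closure of the edge relation.  `U` is an undirected (symmetric) graph whose
edges contain the skeleton of `E`, `C` is a proper coloring of `U`, and `𝓘` is
a colored separating system on `(V, C)`.  For
`D_X = (⋃_{I ∈ 𝓘, X ∈ I} De(X, G_Ī)) ∩ Ne_U(X)` we have
`Ch(X, G) ⊆ D_X ⊆ De(X, G)`. -/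
theorem children_subset_D_subset_descendants
    {V : Type*} [Fintype V] {χ : ℕ}
    (E : V → V → Prop) (hE : ∀ x, ¬ E x x)
    (U : V → V → Prop) (hU : Symmetric U)
    (hskel : ∀ x y, E x y → U x y)
    (C : V → Fin χ) (hC : ∀ x y, U x y → C x ≠ C y)
    (𝓘 : Set (Set V))
    (hsep : ∀ x y : V, x ≠ y → C x ≠ C y → ∃ I ∈ 𝓘, x ∈ I ∧ y ∉ I)
    (D : V → Set V)
    (hD : ∀ X, D X =
      {y | (∃ I ∈ 𝓘, X ∈ I ∧
        Relation.ReflTransGen (fun u v => E u v ∧ v ∉ I) X y) ∧ U X y}) :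
    ∀ X : V, (∀ y, E X y → y ∈ D X) ∧ (D X ⊆ {y | Relation.ReflTransGen E X y}) := by
  intro X
  constructor
  · intro y hxy
    have hUxy := hskel X y hxy
    have hne : X ≠ y := fun h => hC X y hUxy (by rw [h])
    obtain ⟨I, hI, hXI, hyI⟩ := hsep X y hne (hC X y hUxy)
    rw [hD]
    exact ⟨⟨I, hI, hXI, Relation.ReflTransGen.single ⟨hxy, hyI⟩⟩, hUxy⟩
  · intro y hy
    rw [hD] at hy
    obtain ⟨⟨I, _, _, h⟩, _⟩ := hy
    exact Relation.ReflTransGen.mono (p := E) (fun u v h => h.1) X y h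
end

section
/- Let G be a directed graph on a finite vertex set V, let X ∈ V, let S = SCC(X, G) be the strongly connected component of X, let Y ∈ S \ {X}, and let I ⊆ V \ {X} be a set with S \ {X} ⊆ I. Then X is a descendant of Y in the intervened graph G_Ī if and only if (Y, X) is an edge of G. -/
/-- The graph-theoretic core of Lemma 3: let `G` be a directed graph
(irreflexive edge relation `E`) on a finite vertex set `V`, let
`S = SCC(X, G)`, let `Y ∈ S \ {X}`, and let `I ⊆ V \ {X}` contain
`S \ {X}`.  Then `X` is a descendant of `Y` in the intervened graph `G_Ī`
(whose edge relation is `fun u v => E u v ∧ v ∉ I`) if and only if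
`(Y, X)` is an edge of `G`. -/
theorem descendant_after_scc_intervention_iff_edge
    {V : Type*} [Fintype V]
    (E : V → V → Prop) (hE : ∀ x, ¬ E x x)
    (X Y : V) (I : Set V)
    (hYX : Y ≠ X)
    (hYscc : Relation.ReflTransGen E X Y ∧ Relation.ReflTransGen E Y X)
    (hXI : X ∉ I)
    (hSI : ∀ z, z ≠ X →
      (Relation.ReflTransGen E X z ∧ Relation.ReflTransGen E z X) → z ∈ I) :
    Relation.ReflTransGen (fun u v => E u v ∧ v ∉ I) Y X ↔ E Y X := by
  constructor
  · intro h
    rcases h.cases_head with heq | ⟨v, ⟨hEv, hvI⟩, hpath⟩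
    · exact absurd heq hYX
    · have hvX : v = X := by
        by_contra hne
        have hvtoX : Relation.ReflTransGen E v X :=
          Relation.ReflTransGen.mono (fun a b (hab : E a b ∧ b ∉ I) => hab.1) _ _ hpath
        have hXtov : Relation.ReflTransGen E X v := hYscc.1.tail hEv
        exact hvI (hSI v hne ⟨hXtov, hvtoX⟩)
      exact hvX ▸ hEv
  · intro h
    exact Relation.ReflTransGen.single ⟨h, hXI⟩
end

section
/- Let V be a finite set, let V_c ⊆ V with |V_c| = c, let X* and Y* be distinct elements of V_c, and let G' be the directed graph on V whose edge set is {(X, Y) : X, Y ∈ V_c, X ≠ Y} \ {(X*, Y*)}. Then for every I ⊆ V with |I| < c − 1, X* ∈ I, and Y* ∉ I, there exists Z ∈ V_c such that, in the intervened graph G'_Ī, Z is a child of both X* and Y* and a parent of Y* (hence Z is a common child of X* and Y* that is an ancestor of Y*, i.e., X* and Y* are joined by a virtual edge in G'_Ī). -/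
/-- The key sub-claim in the proof of Theorem 1.  Let `Vc ⊆ V` with
`|Vc| = c`, let `X*` and `Y*` be distinct elements of `Vc`, and let `G'` be
the directed graph on `V` whose edges are all ordered pairs of distinct
elements of `Vc` except `(X*, Y*)`.  Then for every `I ⊆ V` with
`|I| < c - 1`, `X* ∈ I` and `Y* ∉ I`, there exists `Z ∈ Vc` such that in the
intervened graph `G'_Ī` (edges of `G'` into `I` removed), `Z` is a child of
both `X*` and `Y*` and a parent of `Y*`; i.e. `X*` and `Y*` are joined by a
virtual edge in `G'_Ī`. -/
theorem virtual_edge_remains {V : Type*} [Fintype V] [DecidableEq V]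
    (Vc : Finset V) (c : ℕ) (hVc : Vc.card = c)
    (Xs Ys : V) (hXs : Xs ∈ Vc) (hYs : Ys ∈ Vc) (hne : Xs ≠ Ys)
    (E' : V → V → Prop)
    (hE' : ∀ x y, E' x y ↔
      (x ∈ Vc ∧ y ∈ Vc ∧ x ≠ y ∧ ¬(x = Xs ∧ y = Ys)))
    (I : Finset V) (hI : I.card < c - 1) (hXsI : Xs ∈ I) (hYsI : Ys ∉ I) :
    ∃ Z ∈ Vc,
      (E' Xs Z ∧ Z ∉ I) ∧ (E' Ys Z ∧ Z ∉ I) ∧ (E' Z Ys ∧ Ys ∉ I) := by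
  have hsub : ¬ Vc ⊆ insert Ys I := by
    intro h
    have := Finset.card_le_card h
    have h2 : (insert Ys I).card ≤ I.card + 1 := Finset.card_insert_le _ _
    omega
  obtain ⟨Z, hZVc, hZ⟩ := Finset.not_subset.mp hsub
  simp only [Finset.mem_insert, not_or] at hZ
  obtain ⟨hZYs, hZI⟩ := hZ
  have hZXs : Z ≠ Xs := fun h => hZI (h ▸ hXsI)
  refine ⟨Z, hZVc, ⟨?_, hZI⟩, ⟨?_, hZI⟩, ⟨?_, hYsI⟩⟩ <;>
    rw [hE'] <;>
    refine ⟨by assumption, by assumption, ?_, ?_⟩ <;> tauto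
end

section
/- Let V be a finite set, let C : V → Fin χ be a coloring of V, and let 𝒮 be a partition of V into nonempty parts with maximum part size s. Then there exists a collection 𝓘 of subsets of V with |𝓘| ≤ 2·⌈log₂ χ⌉ + s that is simultaneously a colored separating system on (V, C) and a lifted separating system on (V, 𝒮). -/
/-- The combinatorial content of Corollary 6: there is a collection of at most
`2 ⌈log₂ χ⌉ + s` subsets of `V` (where `s` is the maximum part size of `𝒮`)
which is simultaneously a colored separating system on `(V, C)` and a lifted
separating system on `(V, 𝒮)`. -/
theorem exists_colored_and_lifted_sep_system {V : Type*} [Fintype V]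
    [DecidableEq V] {χ : ℕ} (C : V → Fin χ)
    (𝒮 : Finpartition (Finset.univ : Finset V)) :
    ∃ 𝓘 : Finset (Finset V),
      𝓘.card ≤ 2 * Nat.clog 2 χ + 𝒮.parts.sup Finset.card ∧
      IsColoredSepSystem C 𝓘 ∧ IsLiftedSepSystem 𝒮 𝓘 := by
  classical
  set f : V ≃ Fin (Fintype.card V) := Fintype.equivFin V
  set k := Nat.clog 2 χ with hk
  set s := 𝒮.parts.sup Finset.card with hs
  set idx : V → ℕ := fun v => ((𝒮.part v).filter (fun w => f w < f v)).card with hidx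
  set A : ℕ → Finset V := fun i => Finset.univ.filter (fun v => (C v : ℕ).testBit i) with hA
  set B : ℕ → Finset V := fun i => Finset.univ.filter (fun v => ¬ (C v : ℕ).testBit i) with hB
  set T : ℕ → Finset V := fun j => Finset.univ.filter (fun v => idx v ≠ j) with hT
  refine ⟨(Finset.range k).image A ∪ (Finset.range k).image B ∪ (Finset.range s).image T,
    ?_, ?_, ?_⟩
  · calc ((Finset.range k).image A ∪ (Finset.range k).image B ∪ (Finset.range s).image T).card
        ≤ ((Finset.range k).image A ∪ (Finset.range k).image B).card
          + ((Finset.range s).image T).card := Finset.card_union_le _ _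
      _ ≤ (((Finset.range k).image A).card + ((Finset.range k).image B).card)
          + ((Finset.range s).image T).card := by
          gcongr
          exact Finset.card_union_le _ _
      _ ≤ (k + k) + s := by
          gcongr <;> exact Finset.card_image_le.trans (by simp)
      _ = 2 * k + s := by ring
  · intro x y hxy hC
    have hne : (C x : ℕ) ≠ (C y : ℕ) := fun h => hC (Fin.ext h)
    have : ∃ i, (C x : ℕ).testBit i ≠ (C y : ℕ).testBit i := by
      by_contra h
      push_neg at h
      exact hne (Nat.eq_of_testBit_eq h)
    obtain ⟨i, hi⟩ := this
    have hχ : χ ≤ 2 ^ k := Nat.le_pow_clog one_lt_two χ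
    have hik : i < k := by
      by_contra h
      push_neg at h
      have h2 : 2 ^ k ≤ 2 ^ i := Nat.pow_le_pow_right (by norm_num) h
      have hx' : (C x : ℕ) < 2 ^ i := lt_of_lt_of_le (lt_of_lt_of_le (C x).2 hχ) h2
      have hy' : (C y : ℕ) < 2 ^ i := lt_of_lt_of_le (lt_of_lt_of_le (C y).2 hχ) h2
      rw [Nat.testBit_lt_two_pow hx', Nat.testBit_lt_two_pow hy'] at hi
      exact hi rfl
    by_cases hbx : (C x : ℕ).testBit i
    · refine ⟨A i, ?_, ?_, ?_⟩
      · exact Finset.mem_union_left _ (Finset.mem_union_left _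
          (Finset.mem_image_of_mem A (Finset.mem_range.2 hik)))
      · simp [hA, hbx]
      · simp only [hA, Finset.mem_filter, Finset.mem_univ, true_and]
        intro hby; exact hi (hbx.trans hby.symm)
    · refine ⟨B i, ?_, ?_, ?_⟩
      · exact Finset.mem_union_left _ (Finset.mem_union_right _
          (Finset.mem_image_of_mem B (Finset.mem_range.2 hik)))
      · simp [hB, hbx]
      · simp only [hB, Finset.mem_filter, Finset.mem_univ, true_and, not_not]
        simp only [Bool.not_eq_true] at hbx
        cases hby : (C y : ℕ).testBit i
        · rw [hbx, hby] at hi; exact absurd rfl hi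
        · simp
  · intro S hS x hx
    have hpart : 𝒮.part x = S := 𝒮.part_eq_of_mem hS hx
    have hidxx : idx x < s := by
      have h1 : ((𝒮.part x).filter (fun w => f w < f x)) ⊂ S := by
        rw [hpart]
        refine Finset.ssubset_iff_of_subset (Finset.filter_subset _ _) |>.2 ⟨x, hx, ?_⟩
        simp
      exact lt_of_lt_of_le (Finset.card_lt_card h1) (Finset.le_sup hS)
    refine ⟨T (idx x), Finset.mem_union_right _
      (Finset.mem_image_of_mem T (Finset.mem_range.2 hidxx)), ?_, ?_⟩
    · intro y hy
      simp only [Finset.mem_sdiff, Finset.mem_singleton] at hy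
      obtain ⟨hyS, hyx⟩ := hy
      have hparty : 𝒮.part y = S := 𝒮.part_eq_of_mem hS hyS
      simp only [hT, Finset.mem_filter, Finset.mem_univ, true_and]
      have hfne : f y ≠ f x := fun h => hyx (f.injective h)
      rcases lt_or_gt_of_ne hfne with h | h
      · have hsub : (S.filter (fun w => f w < f y)) ⊂ (S.filter (fun w => f w < f x)) := by
          refine (Finset.ssubset_iff_of_subset ?_).2 ⟨y, Finset.mem_filter.2 ⟨hyS, h⟩, by simp⟩
          intro w hw
          simp only [Finset.mem_filter] at hw ⊢
          exact ⟨hw.1, lt_trans hw.2 h⟩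
        have hlt : idx y < idx x := by
          simpa [hidx, hparty, hpart] using Finset.card_lt_card hsub
        exact Nat.ne_of_lt hlt
      · have hsub : (S.filter (fun w => f w < f x)) ⊂ (S.filter (fun w => f w < f y)) := by
          refine (Finset.ssubset_iff_of_subset ?_).2 ⟨x, Finset.mem_filter.2 ⟨hx, h⟩, by simp⟩
          intro w hw
          simp only [Finset.mem_filter] at hw ⊢
          exact ⟨hw.1, lt_trans hw.2 h⟩
        have hlt : idx x < idx y := by
          simpa [hidx, hparty, hpart] using Finset.card_lt_card hsub
        exact (Nat.ne_of_lt hlt).symm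
    · simp [hT]
end
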